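/- Let (M_n)_{n∈ℕ} be a square-integrable martingale with respect to a filtration (G_n)_{n∈ℕ} on a probability space, and suppose there exists C > 0 such that E[M_n²] ≤ C·n for every n ≥ 1. Then M_n / n → 0 almost surely as n → ∞. -/

import Mathlib

open MeasureTheory Filter

private lemma aux_integrable_mul {Ω : Type*} {m0 : MeasurableSpace Ω} {μ : Measure Ω}
    {f g : Ω → ℝ} (hf : MemLp f 2 μ) (hg : MemLp g 2 μ) :
    Integrable (fun ω => f ω * g ω) μ := by
  refine Integrable.mono' (((hf.integrable_sq.add hg.integrable_sq)).div_const 2)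
    (hf.aestronglyMeasurable.mul hg.aestronglyMeasurable) ?_
  filter_upwards with ω
  simp only [Real.norm_eq_abs, abs_mul, Pi.add_apply]
  nlinarith [sq_nonneg (|f ω| - |g ω|), sq_abs (f ω), sq_abs (g ω), abs_nonneg (f ω), abs_nonneg (g ω)]

private lemma aux_sq_submartingale {Ω : Type*} {m0 : MeasurableSpace Ω} {μ : Measure Ω}
    [IsProbabilityMeasure μ] (𝒢 : Filtration ℕ m0) (M : ℕ → Ω → ℝ)
    (hM : Martingale M 𝒢 μ) (hsq : ∀ n, MemLp (M n) 2 μ) :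
    Submartingale (fun n ω => M n ω ^ 2) 𝒢 μ := by
  refine submartingale_of_condExp_sub_nonneg_nat ?_ (fun n => (hsq n).integrable_sq) ?_
  · intro n
    simpa [sq, Pi.mul_def] using (hM.stronglyAdapted n).mul (hM.stronglyAdapted n)
  · intro i
    set Δ : Ω → ℝ := fun ω => M (i + 1) ω - M i ω with hΔ
    have hΔmem : MemLp Δ 2 μ := (hsq (i + 1)).sub (hsq i)
    have hΔint : Integrable Δ μ := hΔmem.integrable one_le_two
    have hΔsq : Integrable (fun ω => Δ ω ^ 2) μ := hΔmem.integrable_sq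
    have hprod : Integrable (fun ω => M i ω * Δ ω) μ :=
      aux_integrable_mul (hsq i) hΔmem
    have hkey : (fun ω => M (i + 1) ω ^ 2 - M i ω ^ 2)
        = fun ω => Δ ω ^ 2 + 2 * (M i ω * Δ ω) := by
      funext ω; simp only [hΔ]; ring
    have hcondΔ : μ[Δ|𝒢 i] =ᵐ[μ] 0 := by
      have h1 : μ[M (i + 1)|𝒢 i] =ᵐ[μ] M i := hM.condExp_ae_eq (Nat.le_succ i)
      have h2 : μ[M i|𝒢 i] = M i :=
        condExp_of_stronglyMeasurable (𝒢.le i) (hM.stronglyAdapted i) (hM.integrable i)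
      calc μ[Δ|𝒢 i] =ᵐ[μ] μ[M (i + 1)|𝒢 i] - μ[M i|𝒢 i] :=
            condExp_sub (hM.integrable (i + 1)) (hM.integrable i) _
        _ =ᵐ[μ] M i - M i := by rw [h2]; exact h1.sub (EventuallyEq.refl _ _)
        _ = 0 := by simp
    have hmul : μ[(fun ω => M i ω * Δ ω)|𝒢 i] =ᵐ[μ] (M i) * μ[Δ|𝒢 i] :=
      condExp_mul_of_stronglyMeasurable_left (hM.stronglyAdapted i) hprod hΔint
    have hadd : μ[(fun ω => M (i + 1) ω ^ 2 - M i ω ^ 2)|𝒢 i]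
        =ᵐ[μ] μ[(fun ω => Δ ω ^ 2)|𝒢 i] + μ[(fun ω => 2 * (M i ω * Δ ω))|𝒢 i] := by
      rw [hkey]
      exact condExp_add hΔsq (hprod.const_mul 2) _
    have h2mul : μ[(fun ω => 2 * (M i ω * Δ ω))|𝒢 i]
        =ᵐ[μ] fun ω => 2 * (M i ω * (μ[Δ|𝒢 i]) ω) := by
      have hs := condExp_smul (μ := μ) (m := 𝒢 i) (2 : ℝ) (fun ω => M i ω * Δ ω)
      have heq : (fun ω => 2 * (M i ω * Δ ω)) = (2 : ℝ) • fun ω => M i ω * Δ ω := by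
        funext ω; simp
      rw [heq]
      refine hs.trans ?_
      filter_upwards [hmul] with ω hω
      simp only [Pi.smul_apply, smul_eq_mul, hω, Pi.mul_apply]
    have hnn : 0 ≤ᵐ[μ] μ[(fun ω => Δ ω ^ 2)|𝒢 i] :=
      condExp_nonneg (Eventually.of_forall fun ω => sq_nonneg _)
    have hpi : ((fun ω => M (i + 1) ω ^ 2) - fun ω => M i ω ^ 2)
        = fun ω => M (i + 1) ω ^ 2 - M i ω ^ 2 := rfl
    filter_upwards [hadd, h2mul, hnn, hcondΔ] with ω h1 h2 h3 h4
    rw [Pi.zero_apply, hpi, h1, Pi.add_apply, h2, h4]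
    simpa using h3


/-- a strong law of large numbers for square-integrable
martingales: if `(M_n)` is an `L²` martingale with `E[M_n²] ≤ C n` for all
`n ≥ 1`, then `M_n / n → 0` almost surely. -/
theorem stmt_16 {Ω : Type*} {m0 : MeasurableSpace Ω} {μ : Measure Ω}
    [IsProbabilityMeasure μ]
    (𝒢 : Filtration ℕ m0) (M : ℕ → Ω → ℝ)
    (hM : Martingale M 𝒢 μ)
    (hsq : ∀ n, MemLp (M n) 2 μ)
    (C : ℝ) (hC : 0 < C)
    (hbound : ∀ n : ℕ, 1 ≤ n → ∫ ω, (M n ω) ^ 2 ∂μ ≤ C * n) :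
    ∀ᵐ ω ∂μ, Tendsto (fun n : ℕ => M n ω / n) atTop (nhds 0) := by
  have hsub : Submartingale (fun n ω => M n ω ^ 2) 𝒢 μ := aux_sq_submartingale 𝒢 M hM hsq
  have hnn : (0 : ℕ → Ω → ℝ) ≤ fun n ω => M n ω ^ 2 := fun n ω => sq_nonneg _
  -- threshold values
  set εv : ℕ → ℕ → ℝ := fun m k => ((1 / ((m : ℝ) + 1)) * ((k : ℝ) + 1) ^ 2) ^ 2 with hεv
  have hεvpos : ∀ m k, 0 < εv m k := by intro m k; positivity
  -- the bad events
  set Q : ℕ → ℕ → Set Ω := fun m k =>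
    {ω | εv m k ≤ (Finset.range ((k + 2) ^ 2 + 1)).sup' Finset.nonempty_range_add_one
      fun j => M j ω ^ 2} with hQ
  -- bound on the measure of the bad events
  set a : ℕ → ℕ → ℝ := fun m k => C * ((k : ℝ) + 2) ^ 2 / εv m k with ha
  have hμQ : ∀ m k, μ (Q m k) ≤ ENNReal.ofReal (a m k) := by
    intro m k
    set ε' : NNReal := (εv m k).toNNReal with hε'
    have hco : ((ε' : NNReal) : ℝ) = εv m k := Real.coe_toNNReal _ (hεvpos m k).le
    have hmax := maximal_ineq hsub hnn (ε := ε') ((k + 2) ^ 2)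
    rw [hco] at hmax
    have hint : ENNReal.ofReal (∫ ω in Q m k, M ((k + 2) ^ 2) ω ^ 2 ∂μ)
        ≤ ENNReal.ofReal (C * ((k : ℝ) + 2) ^ 2) := by
      refine ENNReal.ofReal_le_ofReal ?_
      refine le_trans (setIntegral_le_integral (hsq _).integrable_sq
        (Eventually.of_forall fun ω => sq_nonneg _)) ?_
      have := hbound ((k + 2) ^ 2) (Nat.one_le_pow _ _ (by omega))
      calc ∫ ω, M ((k + 2) ^ 2) ω ^ 2 ∂μ ≤ C * (((k + 2) ^ 2 : ℕ) : ℝ) := this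
        _ = C * ((k : ℝ) + 2) ^ 2 := by push_cast; ring
    have hmul : (ε' : ENNReal) * μ (Q m k) ≤ ENNReal.ofReal (C * ((k : ℝ) + 2) ^ 2) := by
      refine le_trans ?_ (le_trans hmax hint)
      exact le_rfl
    have hdiv : μ (Q m k) ≤ ENNReal.ofReal (C * ((k : ℝ) + 2) ^ 2) / (ε' : ENNReal) := by
      have hne : (ε' : ENNReal) ≠ 0 := by
        simp only [ne_eq, ENNReal.coe_eq_zero, hε', Real.toNNReal_eq_zero, not_le]
        exact hεvpos m k
      rw [ENNReal.le_div_iff_mul_le (Or.inl hne) (Or.inl ENNReal.coe_ne_top)]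
      rw [mul_comm]; exact hmul
    refine le_trans hdiv (le_of_eq ?_)
    rw [show a m k = C * ((k : ℝ) + 2) ^ 2 / εv m k from rfl,
      ENNReal.ofReal_div_of_pos (hεvpos m k)]
    rfl
  -- summability
  have hsum : ∀ m, Summable (a m) := by
    intro m
    have hb : Summable (fun k : ℕ => (4 * C * ((m : ℝ) + 1) ^ 2) * (1 / ((k : ℝ) + 1) ^ 2)) := by
      refine Summable.mul_left _ ?_
      have h2 : Summable (fun n : ℕ => 1 / (n : ℝ) ^ 2) :=
        (Real.summable_one_div_nat_pow).2 one_lt_two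
      have := (summable_nat_add_iff 1).2 h2
      simpa using this
    refine Summable.of_nonneg_of_le (fun k => ?_) (fun k => ?_) hb
    · exact div_nonneg (by positivity) (hεvpos m k).le
    · rw [ha]
      simp only
      rw [hεv]
      simp only
      rw [div_le_iff₀ (by positivity)]
      have hk1 : (1 : ℝ) ≤ (k : ℝ) + 1 := by norm_num [Nat.cast_nonneg]
      have hm1 : (0 : ℝ) < (m : ℝ) + 1 := by positivity
      have heq : (4 * C * ((m:ℝ)+1)^2 * (1/((k:ℝ)+1)^2) * (1/((m:ℝ)+1) * ((k:ℝ)+1)^2)^2)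
          = 4 * C * ((k:ℝ)+1)^2 := by field_simp
      rw [heq]
      nlinarith [mul_nonneg hC.le (Nat.cast_nonneg (α := ℝ) k),
        mul_nonneg (mul_nonneg hC.le (Nat.cast_nonneg (α := ℝ) k)) (Nat.cast_nonneg (α := ℝ) k)]
  -- Borel-Cantelli
  have hBC : ∀ m : ℕ, ∀ᵐ ω ∂μ, ∀ᶠ k in atTop, ω ∉ Q m k := by
    intro m
    refine ae_eventually_notMem ?_
    refine ne_top_of_le_ne_top ?_ (ENNReal.tsum_le_tsum (hμQ m))
    rw [← ENNReal.ofReal_tsum_of_nonneg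
      (fun k => div_nonneg (by positivity) (hεvpos m k).le) (hsum m)]
    exact ENNReal.ofReal_ne_top
  rw [← ae_all_iff] at hBC
  filter_upwards [hBC] with ω hω
  rw [Metric.tendsto_atTop]
  intro ε hε
  obtain ⟨m, hm⟩ := exists_nat_one_div_lt hε
  obtain ⟨K, hK⟩ := eventually_atTop.1 (hω m)
  refine ⟨(K + 2) ^ 2, fun n hn => ?_⟩
  have hs1 : K + 1 ≤ Nat.sqrt n := by
    have : Nat.sqrt ((K + 1) ^ 2) ≤ Nat.sqrt n :=
      Nat.sqrt_le_sqrt (le_trans (Nat.pow_le_pow_left (by omega) 2) hn)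
    rwa [Nat.sqrt_eq'] at this
  set s := Nat.sqrt n with hsdef
  set k := s - 1 with hkdef
  have hks : k + 1 = s := by omega
  have hnot := hK k (by omega)
  rw [hQ, Set.mem_setOf_eq, not_le] at hnot
  have hnmem : n ∈ Finset.range ((k + 2) ^ 2 + 1) := by
    have h2 : n < (s + 1) ^ 2 := Nat.lt_succ_sqrt' n
    have : k + 2 = s + 1 := by omega
    rw [this]
    exact Finset.mem_range.2 (by omega)
  have hle : M n ω ^ 2 ≤ (Finset.range ((k + 2) ^ 2 + 1)).sup' Finset.nonempty_range_add_one
      fun j => M j ω ^ 2 := Finset.le_sup' (fun j => M j ω ^ 2) hnmem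
  have habs : |M n ω| < (1 / ((m : ℝ) + 1)) * ((k : ℝ) + 1) ^ 2 :=
    abs_lt_of_sq_lt_sq (lt_of_le_of_lt hle hnot) (by positivity)
  have hsn : ((k : ℝ) + 1) ^ 2 ≤ (n : ℝ) := by
    have h1 : s ^ 2 ≤ n := Nat.sqrt_le' n
    have h2 : ((k + 1 : ℕ) : ℝ) ^ 2 ≤ (n : ℝ) := by
      rw [hks]; exact_mod_cast h1
    push_cast at h2; exact h2
  have hnpos : (0 : ℝ) < n := by
    have : 1 ≤ n := le_trans (Nat.one_le_pow _ _ (by omega)) hn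
    exact_mod_cast this
  rw [Real.dist_eq, sub_zero, abs_div, abs_of_pos hnpos, div_lt_iff₀ hnpos]
  calc |M n ω| < (1 / ((m : ℝ) + 1)) * ((k : ℝ) + 1) ^ 2 := habs
    _ ≤ (1 / ((m : ℝ) + 1)) * n := by
        refine mul_le_mul_of_nonneg_left hsn (by positivity)
    _ < ε * n := by
        refine mul_lt_mul_of_pos_right ?_ hnpos
        exact hm
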